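/- Let N ≥ 5 and A = K[x₁,x₂]/(x₁^N, x₂^N, x₁^{N−2}x₂^{N−2}). The ranked poset M(A) of monomials not in the ideal, ordered by divisibility, is log-concave: (dim_K A_i)² ≥ (dim_K A_{i−1})(dim_K A_{i+1}) for all i. -/
import Mathlib


open MvPolynomial

/-- The minimal number of generators of an ideal. -/
noncomputable def mu {R : Type*} [CommRing R] (I : Ideal R) : ℕ :=
  sInf {k | ∃ s : Finset R, s.card = k ∧ Ideal.span (s : Set R) = I}

/-- The graded maximal ideal `(x₁, …, xₙ)` of `K[x₁, …, xₙ]`. -/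
noncomputable def mm (K : Type*) [Field K] (n : ℕ) : Ideal (MvPolynomial (Fin n) K) :=
  Ideal.span (Set.range X)

/-- `I` is `m`-full: `mI : y = I` for some `y ∈ m`. -/
def IsMFull {R : Type*} [CommRing R] (m I : Ideal R) : Prop :=
  ∃ y ∈ m, (m * I).colon (Ideal.span {y}) = I

/-- A homogeneous ideal: one containing all homogeneous components of its elements. -/
def IsHomog {K : Type*} [Field K] {n : ℕ} (I : Ideal (MvPolynomial (Fin n) K)) : Prop :=
  ∀ f ∈ I, ∀ k : ℕ, homogeneousComponent k f ∈ I

/-- `dim_K (S/I)_k`, the dimension of the degree `k` part of `S/I`. -/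
noncomputable def hdim (K : Type*) [Field K] (n : ℕ)
    (I : Ideal (MvPolynomial (Fin n) K)) (k : ℕ) : ℕ :=
  Module.finrank K (Submodule.map (Ideal.Quotient.mkₐ K I).toLinearMap
    (homogeneousSubmodule (Fin n) K k))

/-- The total degree of an exponent vector. -/
def mdeg {n : ℕ} (d : Fin n →₀ ℕ) : ℕ := d.sum fun _ e => e

/-- `M_k(S/I)`: the exponent vectors of degree `k` monomials not in `I`. -/
def MSet (K : Type*) [Field K] {n : ℕ} (I : Ideal (MvPolynomial (Fin n) K)) (k : ℕ) :
    Set (Fin n →₀ ℕ) := {d | mdeg d = k ∧ (monomial d (1 : K)) ∉ I}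

/-- `I` is a monomial ideal. -/
def IsMonomialIdeal {K : Type*} [Field K] {n : ℕ} (I : Ideal (MvPolynomial (Fin n) K)) : Prop :=
  ∀ f ∈ I, ∀ d ∈ f.support, (monomial d (1 : K)) ∈ I

/-- The LYM property of the divisibility poset of monomials outside `I`,
ranked by degree.  (Divisibility of monomials is the pointwise order `≤` on
exponent vectors.) -/
def MLYM (K : Type*) [Field K] {n : ℕ} (I : Ideal (MvPolynomial (Fin n) K)) : Prop :=
  ∀ F : Finset (Fin n →₀ ℕ), (∀ d ∈ F, (monomial d (1 : K)) ∉ I) →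
    IsAntichain (· ≤ ·) (F : Set (Fin n →₀ ℕ)) →
    ∑ d ∈ F, (1 : ℚ) / (MSet K I (mdeg d)).ncard ≤ 1

/-- The Sperner property of the Artinian algebra `S/I`:
the maximal number of generators of an ideal of `S/I` equals the maximal
value of the Hilbert function of `S/I`. -/
def SpernerAlg {K : Type*} [Field K] {n : ℕ} (I : Ideal (MvPolynomial (Fin n) K)) : Prop :=
  sSup {m | ∃ J : Ideal (MvPolynomial (Fin n) K ⧸ I), mu J = m}
    = sSup (Set.range (hdim K n I))


section Aux

private lemma aux_fin2_decomp (d : Fin 2 →₀ ℕ) :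
    d = Finsupp.single 0 (d 0) + Finsupp.single 1 (d 1) := by
  ext a
  fin_cases a <;> simp [Finsupp.single_apply, Fin.ext_iff]

private lemma aux_mdeg_eq (d : Fin 2 →₀ ℕ) : mdeg d = d 0 + d 1 := by
  rw [mdeg, Finsupp.sum_fintype _ _ (fun _ => rfl), Fin.sum_univ_two]

private lemma aux_eval_g0 (a b : ℕ) :
    (Finsupp.single 0 a + Finsupp.single 1 b : Fin 2 →₀ ℕ) 0 = a := by
  simp [Finsupp.single_apply, Fin.ext_iff]

private lemma aux_eval_g1 (a b : ℕ) :
    (Finsupp.single 0 a + Finsupp.single 1 b : Fin 2 →₀ ℕ) 1 = b := by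
  simp [Finsupp.single_apply, Fin.ext_iff]

private lemma aux_sum_single_le (a b : ℕ) (d : Fin 2 →₀ ℕ) :
    Finsupp.single 0 a + Finsupp.single 1 b ≤ d ↔ a ≤ d 0 ∧ b ≤ d 1 := by
  rw [Finsupp.le_def]
  constructor
  · intro h
    exact ⟨by simpa [Finsupp.single_apply, Fin.ext_iff] using h 0,
      by simpa [Finsupp.single_apply, Fin.ext_iff] using h 1⟩
  · rintro ⟨h0, h1⟩ i
    fin_cases i <;> simp [Finsupp.single_apply, Fin.ext_iff] <;> omega

private lemma aux_mem_char {K : Type*} [Field K] (N : ℕ) (d : Fin 2 →₀ ℕ) :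
    (monomial d (1:K)) ∈
      Ideal.span ({X 0 ^ N, X 1 ^ N, X 0 ^ (N-2) * X 1 ^ (N-2)} :
        Set (MvPolynomial (Fin 2) K)) ↔
      N ≤ d 0 ∨ N ≤ d 1 ∨ (N-2 ≤ d 0 ∧ N-2 ≤ d 1) := by
  have himg : ({X 0 ^ N, X 1 ^ N, X 0 ^ (N-2) * X 1 ^ (N-2)} :
      Set (MvPolynomial (Fin 2) K)) =
      (fun s => monomial s (1:K)) ''
        {Finsupp.single 0 N, Finsupp.single 1 N,
          Finsupp.single 0 (N-2) + Finsupp.single 1 (N-2)} := by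
    simp only [Set.image_insert_eq, Set.image_singleton, X_pow_eq_monomial,
      monomial_mul, one_mul]
  rw [himg, mem_ideal_span_monomial_image]
  simp only [Set.mem_insert_iff, Set.mem_singleton_iff, exists_eq_or_imp,
    exists_eq_left, Finsupp.single_le_iff, aux_sum_single_le]
  simp [support_monomial]

/-- The Hilbert function of `K[x,y]/(x^N, y^N, x^(N-2)y^(N-2))` in closed form. -/
private def hfun (N i : ℕ) : ℕ := if i < N then i + 1 else (2*N-1-i) - (i+5-2*N)

private lemma aux_filter_card (N i : ℕ) (hN : 5 ≤ N) :
    (Finset.filter (fun a => a < N ∧ i - a < N ∧ ¬(N-2 ≤ a ∧ N-2 ≤ i-a))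
      (Finset.range (i+1))).card = hfun N i := by
  have hset : (Finset.filter (fun a => a < N ∧ i - a < N ∧ ¬(N-2 ≤ a ∧ N-2 ≤ i-a))
      (Finset.range (i+1))) =
      Finset.Icc (i+1-N) (min i (N-1)) \ Finset.Icc (N-2) (i-(N-2)) := by
    ext a
    simp only [Finset.mem_filter, Finset.mem_range, Finset.mem_sdiff, Finset.mem_Icc]
    omega
  have hint : Finset.Icc (i+1-N) (min i (N-1)) ∩ Finset.Icc (N-2) (i-(N-2)) =
      Finset.Icc (max (i+1-N) (N-2)) (min (min i (N-1)) (i-(N-2))) := by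
    ext a
    simp only [Finset.mem_inter, Finset.mem_Icc]
    omega
  have hc := Finset.card_sdiff_add_card_inter (Finset.Icc (i+1-N) (min i (N-1)))
    (Finset.Icc (N-2) (i-(N-2)))
  rw [hset]
  rw [hint] at hc
  rw [Nat.card_Icc, Nat.card_Icc] at hc
  unfold hfun
  split_ifs with h <;> omega

private lemma aux_mset_eq {K : Type*} [Field K] (N : ℕ) (hN : 5 ≤ N)
    (I : Ideal (MvPolynomial (Fin 2) K))
    (hchar : ∀ d : Fin 2 →₀ ℕ, (monomial d (1:K)) ∈ I ↔
      N ≤ d 0 ∨ N ≤ d 1 ∨ (N-2 ≤ d 0 ∧ N-2 ≤ d 1)) (i : ℕ) :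
    (MSet K I i).ncard = hfun N i := by
  rw [← aux_filter_card N i hN]
  set F := Finset.filter (fun a => a < N ∧ i - a < N ∧ ¬(N-2 ≤ a ∧ N-2 ≤ i-a))
      (Finset.range (i+1)) with hF
  have hkey : MSet K I i =
      (fun a => (Finsupp.single 0 a + Finsupp.single 1 (i-a) : Fin 2 →₀ ℕ)) '' ↑F := by
    ext d
    constructor
    · rintro ⟨hdeg, hnot⟩
      rw [aux_mdeg_eq] at hdeg
      rw [hchar] at hnot
      push_neg at hnot
      refine ⟨d 0, ?_, ?_⟩
      · simp only [hF, Finset.coe_filter, Finset.mem_range, Set.mem_setOf_eq]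
        omega
      · have h1 : i - d 0 = d 1 := by omega
        show (Finsupp.single 0 (d 0) + Finsupp.single 1 (i - d 0) : Fin 2 →₀ ℕ) = d
        rw [h1]; exact (aux_fin2_decomp d).symm
    · rintro ⟨a, ha, rfl⟩
      simp only [hF, Finset.coe_filter, Finset.mem_range, Set.mem_setOf_eq] at ha
      constructor
      · rw [aux_mdeg_eq, aux_eval_g0, aux_eval_g1]; omega
      · rw [hchar, aux_eval_g0, aux_eval_g1]; omega
  rw [hkey, Set.ncard_image_of_injective _ ?_, Set.ncard_coe_finset]
  intro a b hab
  have := congrArg (fun f : Fin 2 →₀ ℕ => f 0) hab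
  simpa [aux_eval_g0] using this

private lemma aux_logcc (N i : ℕ) (hN : 5 ≤ N) :
    hfun N i * hfun N (i+2) ≤ hfun N (i+1) ^ 2 := by
  unfold hfun
  rcases lt_trichotomy (i+2) N with h | h | h
  · rw [if_pos (by omega : i < N), if_pos (by omega : i+2 < N),
      if_pos (by omega : i+1 < N)]
    nlinarith
  · rw [if_pos (by omega : i < N), if_neg (by omega : ¬ i+2 < N),
      if_pos (by omega : i+1 < N)]
    have h1 : 2*N-1-(i+2) - (i+2+5-2*N) ≤ i + 1 := by omega
    calc (i+1) * (2*N-1-(i+2) - (i+2+5-2*N)) ≤ (i+1) * (i+1) :=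
          Nat.mul_le_mul_left _ h1
      _ ≤ (i+1+1)^2 := by nlinarith
  · rcases lt_trichotomy (i+1) N with h2 | h2 | h2
    · omega
    · rw [if_pos (by omega : i < N), if_neg (by omega : ¬ i+2 < N),
        if_neg (by omega : ¬ i+1 < N)]
      have e1 : 2*N-1-(i+1) - (i+1+5-2*N) = N - 1 := by omega
      have e2 : 2*N-1-(i+2) - (i+2+5-2*N) ≤ N - 2 := by omega
      have key : N * (N-2) ≤ (N-1)^2 := by
        rcases Nat.exists_eq_add_of_le hN with ⟨k, rfl⟩
        have ea : 5+k-2 = 3+k := by omega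
        have eb : 5+k-1 = 4+k := by omega
        rw [ea, eb]; nlinarith
      calc (i+1) * (2*N-1-(i+2) - (i+2+5-2*N)) ≤ N * (N-2) :=
            Nat.mul_le_mul (by omega) e2
        _ ≤ (N-1)^2 := key
        _ = (2*N-1-(i+1) - (i+1+5-2*N))^2 := by rw [e1]
    · rw [if_neg (by omega : ¬ i < N), if_neg (by omega : ¬ i+2 < N),
        if_neg (by omega : ¬ i+1 < N)]
      rcases le_or_gt (i+7) (2*N) with h3 | h3
      · obtain ⟨m, e0, e1, e2⟩ : ∃ m, 2*N-1-i - (i+5-2*N) = m+2 ∧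
            2*N-1-(i+1) - (i+1+5-2*N) = m+1 ∧ 2*N-1-(i+2) - (i+2+5-2*N) = m :=
          ⟨2*N-3-i, by omega, by omega, by omega⟩
        rw [e0, e1, e2]; nlinarith
      · rcases le_or_gt (i+6) (2*N) with h4 | h4
        · have e0 : 2*N-1-i - (i+5-2*N) = 5 := by omega
          have e1 : 2*N-1-(i+1) - (i+1+5-2*N) = 4 := by omega
          have e2 : 2*N-1-(i+2) - (i+2+5-2*N) = 2 := by omega
          rw [e0, e1, e2]; norm_num
        · have e2 : 2*N-1-(i+2) - (i+2+5-2*N) = 0 := by omega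
          rw [e2, Nat.mul_zero]; exact Nat.zero_le _

end Aux

/-- For `N ≥ 5`, the monomial poset of
`A = K[x₁,x₂]/(x₁^N, x₂^N, x₁^{N-2}x₂^{N-2})` is log-concave:
`(dim_K A_i)² ≥ (dim_K A_{i-1})(dim_K A_{i+1})` for all `i`. -/
theorem stmt16 {K : Type*} [Field K] (N : ℕ) (hN : 5 ≤ N)
    (I : Ideal (MvPolynomial (Fin 2) K))
    (hI : I = Ideal.span {X 0 ^ N, X 1 ^ N, X 0 ^ (N - 2) * X 1 ^ (N - 2)}) :
    ∀ i : ℕ, (MSet K I i).ncard * (MSet K I (i + 2)).ncard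
      ≤ (MSet K I (i + 1)).ncard ^ 2 := by
  intro i
  have hchar : ∀ d : Fin 2 →₀ ℕ, (monomial d (1:K)) ∈ I ↔
      N ≤ d 0 ∨ N ≤ d 1 ∨ (N-2 ≤ d 0 ∧ N-2 ≤ d 1) := by
    intro d
    rw [hI]
    exact aux_mem_char N d
  rw [aux_mset_eq N hN I hchar, aux_mset_eq N hN I hchar, aux_mset_eq N hN I hchar]
  exact aux_logcc N i hN
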